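/- Let q ≥ 1 be an odd integer, n a positive integer, and β₁, ..., β_{q-1} nonnegative integers with β₁ + ... + β_{q-1} ≤ n. Then the polynomial f(t) = n + β₁t + ... + β_{q-1}t^{q-1} is coprime to t^q - 1 in ℚ[t]; equivalently, the ideal generated by the image of f in ℚ[t]/(t^q - 1) is the whole ring. -/

import Mathlib

open Polynomial

/-- If `f(t) = n + β₁ t + ⋯ + β_{q-1} t^{q-1}` with `βᵢ ≥ 0` and `Σ βᵢ ≤ n`,
then `f` is coprime to `t^q - 1` in `ℚ[t]` (`q` odd). -/
theorem stmt4 (q n : ℕ) (hq : 1 ≤ q) (hodd : Odd q) (hn : 0 < n)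
    (β : ℕ → ℕ) (hβ : ∑ i ∈ Finset.Icc 1 (q - 1), β i ≤ n) :
    IsCoprime ((C (n : ℚ)) + ∑ i ∈ Finset.Icc 1 (q - 1), C ((β i : ℚ)) * X ^ i)
      ((X : ℚ[X]) ^ q - 1) := by
  refine (Polynomial.isCoprime_iff_aeval_ne_zero_of_isAlgClosed (k := ℚ) ℂ _ _).mpr ?_
  intro a
  by_cases ha : a ^ q = 1
  swap
  · right
    simp [sub_ne_zero, ha]
  left
  have hq0 : q ≠ 0 := by omega
  have habs : ‖a‖ = 1 := by
    have h1 : ‖a‖ ^ q = 1 := by rw [← norm_pow, ha, norm_one]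
    have h0 : (0:ℝ) ≤ ‖a‖ := norm_nonneg a
    rcases lt_trichotomy ‖a‖ 1 with h | h | h
    · exact absurd h1 (by nlinarith [pow_lt_one₀ h0 h hq0])
    · exact h
    · exact absurd h1 (by nlinarith [one_lt_pow₀ h hq0])
  have key : ∀ i : ℕ, -1 < (a ^ i).re := by
    intro i
    have habsi : ‖a ^ i‖ = 1 := by rw [norm_pow, habs, one_pow]
    have hle : |(a ^ i).re| ≤ 1 := by
      have := Complex.abs_re_le_norm (a ^ i)
      rwa [habsi] at this
    have hne : (a ^ i).re ≠ -1 := by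
      intro h
      have hsq : (a ^ i).re ^ 2 + (a ^ i).im ^ 2 = 1 := by
        have h' := Complex.sq_norm (a ^ i)
        rw [habsi, Complex.normSq_apply] at h'
        nlinarith [h']
      have him : (a ^ i).im = 0 := by nlinarith [sq_nonneg (a ^ i).im]
      have hm1 : a ^ i = -1 := by
        apply Complex.ext <;> simp [h, him]
      have h3 : ((-1 : ℂ)) ^ q = 1 := by
        rw [← hm1, ← pow_mul, mul_comm, pow_mul, ha, one_pow]
      rw [hodd.neg_one_pow] at h3
      norm_num at h3
    rcases (abs_le.mp hle).1.lt_or_eq with h | h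
    · exact h
    · exact absurd h.symm hne
  have heval : (aeval a) ((C (n : ℚ)) + ∑ i ∈ Finset.Icc 1 (q - 1), C ((β i : ℚ)) * X ^ i)
      = (n : ℂ) + ∑ i ∈ Finset.Icc 1 (q - 1), (β i : ℂ) * a ^ i := by
    simp
  rw [heval]
  intro hcontra
  have hre : (0:ℝ) = (n : ℝ) + ∑ i ∈ Finset.Icc 1 (q - 1), (β i : ℝ) * (a ^ i).re := by
    have := congrArg Complex.re hcontra
    simpa [Complex.add_re, Complex.re_sum, Complex.mul_re] using this.symm
  by_cases hz : ∀ i ∈ Finset.Icc 1 (q - 1), β i = 0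
  · rw [Finset.sum_eq_zero (fun i hi => by rw [hz i hi]; simp)] at hre
    have : (0:ℝ) < n := by exact_mod_cast hn
    linarith
  · push_neg at hz
    obtain ⟨i₀, hi₀, hb⟩ := hz
    have hsum : -(∑ i ∈ Finset.Icc 1 (q - 1), (β i : ℝ))
        < ∑ i ∈ Finset.Icc 1 (q - 1), (β i : ℝ) * (a ^ i).re := by
      rw [← Finset.sum_neg_distrib]
      apply Finset.sum_lt_sum
      · intro i hi
        have h1 := key i
        have h2 : (0:ℝ) ≤ (β i : ℝ) := Nat.cast_nonneg _
        nlinarith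
      · refine ⟨i₀, hi₀, ?_⟩
        have h1 := key i₀
        have h2 : (0:ℝ) < (β i₀ : ℝ) := by exact_mod_cast Nat.pos_of_ne_zero hb
        nlinarith
    have hβ' : (∑ i ∈ Finset.Icc 1 (q - 1), (β i : ℝ)) ≤ (n : ℝ) := by
      push_cast [← Nat.cast_sum] at *
      exact_mod_cast hβ
    linarith
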